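/- arXiv:2006.09576 — 2 statements merged into one kernel-verified Lean document; each statement's English description precedes it below -/
import Mathlib

section
/- Let L be a subdirectly irreducible pk-algebra and C(x) = (x ∧ x') ∨ (x ∧ x')*. Then C(a)' ≤ C(a) holds for every a ∈ L if and only if Body(L) is empty. -/
/-- A pseudocomplemented De Morgan algebra (pm-algebra): a bounded distributive
lattice with a De Morgan involution `dm` and a pseudocomplement `pc`. -/
class PMAlgebra (L : Type*) extends DistribLattice L, BoundedOrder L where
  dm : L → L
  pc : L → L
  dm_dm : ∀ a : L, dm (dm a) = a
  dm_inf : ∀ a b : L, dm (a ⊓ b) = dm a ⊔ dm b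
  pc_iff : ∀ a b : L, a ⊓ b = ⊥ ↔ b ≤ pc a

namespace PMAlgebra

variable {L : Type*} [PMAlgebra L]

/-- A congruence of a pm-algebra. -/
def IsCongruence (θ : L → L → Prop) : Prop :=
  Equivalence θ ∧
  (∀ a b c d : L, θ a b → θ c d → θ (a ⊓ c) (b ⊓ d)) ∧
  (∀ a b c d : L, θ a b → θ c d → θ (a ⊔ c) (b ⊔ d)) ∧
  (∀ a b : L, θ a b → θ (dm a) (dm b)) ∧
  (∀ a b : L, θ a b → θ (pc a) (pc b))

/-- `L` is simple: it has more than one element and its only congruences are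
equality and the total relation. -/
def Simple (L : Type*) [PMAlgebra L] : Prop :=
  Nontrivial L ∧ ∀ θ : L → L → Prop, IsCongruence θ →
    θ = (fun a b => a = b) ∨ θ = (fun _ _ => True)

/-- `L` is subdirectly irreducible: there is a congruence `μ ≠ Eq` contained in
every congruence different from equality. -/
def SubdirectlyIrreducible (L : Type*) [PMAlgebra L] : Prop :=
  ∃ μ : L → L → Prop, IsCongruence μ ∧ μ ≠ (fun a b => a = b) ∧
    ∀ θ : L → L → Prop, IsCongruence θ → θ ≠ (fun a b => a = b) →
      ∀ a b : L, μ a b → θ a b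

/-- A prime filter of the underlying lattice of `L`. -/
def IsPrimeFilter (P : Set L) : Prop :=
  P.Nonempty ∧ P ≠ Set.univ ∧
  (∀ a b : L, a ∈ P → a ≤ b → b ∈ P) ∧
  (∀ a b : L, a ∈ P → b ∈ P → a ⊓ b ∈ P) ∧
  (∀ a b : L, a ⊔ b ∈ P → a ∈ P ∨ b ∈ P)

/-- The Birula–Rasiowa transformation. -/
def phi (P : Set L) : Set L := {a : L | dm a ∉ P}

/-- `P` is a maximal prime filter. -/
def IsMaximalPF (P : Set L) : Prop :=
  IsPrimeFilter P ∧ ∀ Q : Set L, IsPrimeFilter Q → P ⊆ Q → Q = P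

/-- `P` is a minimal prime filter. -/
def IsMinimalPF (P : Set L) : Prop :=
  IsPrimeFilter P ∧ ∀ Q : Set L, IsPrimeFilter Q → Q ⊆ P → Q = P

/-- The body of `L`: prime filters that are neither maximal nor minimal. -/
def body (L : Type*) [PMAlgebra L] : Set (Set L) :=
  {P : Set L | IsPrimeFilter P ∧ ¬ IsMaximalPF P ∧ ¬ IsMinimalPF P}

/-- The prime filter space of `L` is φ-connected. -/
def PhiConnected (L : Type*) [PMAlgebra L] : Prop :=
  ∀ S : Set (Set L), S ⊆ {P : Set L | IsPrimeFilter P} → S.Nonempty →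
    (∀ P Q : Set L, P ∈ S → IsPrimeFilter Q → P ⊆ Q → Q ∈ S) →
    (∀ P Q : Set L, P ∈ S → IsPrimeFilter Q → Q ⊆ P → Q ∈ S) →
    (∀ P : Set L, P ∈ S → phi P ∈ S) →
    S = {P : Set L | IsPrimeFilter P}

/-- The Kleene identity. -/
def Kleene (L : Type*) [PMAlgebra L] : Prop :=
  ∀ a b : L, a ⊓ dm a ≤ b ⊔ dm b

/-- The term `C(x) = (x ∧ x') ∨ (x ∧ x')*`. -/
def C (x : L) : L := (x ⊓ dm x) ⊔ pc (x ⊓ dm x)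

/-- The term `T(x) = C(x) ∧ C(x)'`. -/
def T (x : L) : L := C x ⊓ dm (C x)

end PMAlgebra

namespace PMAlgebra

variable {L : Type*} [PMAlgebra L]

lemma dm_antitone {a b : L} (h : a ≤ b) : dm b ≤ dm a := by
  have h1 : a ⊓ b = a := inf_eq_left.mpr h
  have := dm_inf a b
  rw [h1] at this
  rw [this]; exact le_sup_right

lemma dm_sup (a b : L) : dm (a ⊔ b) = dm a ⊓ dm b := by
  have h := dm_inf (dm a) (dm b)
  rw [dm_dm, dm_dm] at h
  calc dm (a ⊔ b) = dm (dm (dm a ⊓ dm b)) := by rw [h]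
    _ = dm a ⊓ dm b := dm_dm _

lemma dm_bot : dm (⊥ : L) = ⊤ := by
  have := dm_antitone (bot_le : (⊥:L) ≤ dm ⊤)
  rw [dm_dm] at this
  exact le_antisymm le_top this

lemma dm_top : dm (⊤ : L) = ⊥ := by
  have := dm_antitone (le_top : dm (⊥:L) ≤ ⊤)
  rw [dm_dm] at this
  exact le_antisymm this bot_le

lemma inf_pc (a : L) : a ⊓ pc a = ⊥ := (pc_iff a (pc a)).mpr le_rfl

lemma prime_top_mem {P : Set L} (hP : IsPrimeFilter P) : ⊤ ∈ P := by
  obtain ⟨x, hx⟩ := hP.1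
  exact hP.2.2.1 x ⊤ hx le_top

lemma prime_bot_notMem {P : Set L} (hP : IsPrimeFilter P) : ⊥ ∉ P := by
  intro h
  apply hP.2.1
  ext x
  simp only [Set.mem_univ, iff_true]
  exact hP.2.2.1 ⊥ x h bot_le

/-- Prime filter separation via Zorn. -/
lemma sep {F I : Set L} (hFne : F.Nonempty)
    (hFup : ∀ a b : L, a ∈ F → a ≤ b → b ∈ F)
    (hFinf : ∀ a b : L, a ∈ F → b ∈ F → a ⊓ b ∈ F)
    (hIne : I.Nonempty)
    (hIsup : ∀ a b : L, a ∈ I → b ∈ I → a ⊔ b ∈ I)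
    (hdisj : ∀ x : L, x ∈ F → x ∉ I) :
    ∃ P : Set L, IsPrimeFilter P ∧ F ⊆ P ∧ ∀ x ∈ I, x ∉ P := by
  classical
  set S : Set (Set L) := {G | F ⊆ G ∧ (∀ a b : L, a ∈ G → a ≤ b → b ∈ G) ∧
      (∀ a b : L, a ∈ G → b ∈ G → a ⊓ b ∈ G) ∧ (∀ x : L, x ∈ G → x ∉ I)} with hS
  have hFS : F ∈ S := ⟨le_refl F, hFup, hFinf, hdisj⟩
  obtain ⟨m, hFm, hm⟩ := zorn_subset_nonempty S (fun c hcS hchain hcne => by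
    obtain ⟨G0, hG0⟩ := hcne
    refine ⟨⋃₀ c, ⟨?_, ?_, ?_, ?_⟩, fun s hs => Set.subset_sUnion_of_mem hs⟩
    · exact (hcS hG0).1.trans (Set.subset_sUnion_of_mem hG0)
    · rintro a b ⟨G, hG, haG⟩ hab
      exact ⟨G, hG, (hcS hG).2.1 a b haG hab⟩
    · rintro a b ⟨G1, hG1, ha⟩ ⟨G2, hG2, hb⟩
      rcases hchain.total hG1 hG2 with h | h
      · exact ⟨G2, hG2, (hcS hG2).2.2.1 a b (h ha) hb⟩
      · exact ⟨G1, hG1, (hcS hG1).2.2.1 a b ha (h hb)⟩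
    · rintro x ⟨G, hG, hx⟩
      exact (hcS hG).2.2.2 x hx) F hFS
  have hmS : m ∈ S := hm.prop
  obtain ⟨hFsub, hup, hinf, hdis⟩ := hmS
  -- m is a prime filter
  refine ⟨m, ⟨hFne.mono hFsub, ?_, hup, hinf, ?_⟩, hFsub, fun x hxI hxm => hdis x hxm hxI⟩
  · intro h
    obtain ⟨i, hi⟩ := hIne
    exact hdis i (h ▸ Set.mem_univ i) hi
  · intro a b hab
    by_contra hcon
    push_neg at hcon
    obtain ⟨ha, hb⟩ := hcon
    -- extension by an element
    have key : ∀ x : L, x ∉ m → ∃ i ∈ I, ∃ g ∈ m, g ⊓ x ≤ i := by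
      intro x hx
      by_contra hno
      push_neg at hno
      set G := {w : L | ∃ g ∈ m, g ⊓ x ≤ w} with hG
      have hGS : G ∈ S := by
        refine ⟨?_, ?_, ?_, ?_⟩
        · intro f hf
          exact ⟨f, hFsub hf, inf_le_left⟩
        · rintro u v ⟨g, hg, hgu⟩ huv
          exact ⟨g, hg, hgu.trans huv⟩
        · rintro u v ⟨g1, hg1, h1⟩ ⟨g2, hg2, h2⟩
          refine ⟨g1 ⊓ g2, hinf _ _ hg1 hg2, ?_⟩
          refine le_inf (le_trans ?_ h1) (le_trans ?_ h2)
          · exact inf_le_inf_right x inf_le_left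
          · exact inf_le_inf_right x inf_le_right
        · rintro w ⟨g, hg, hgw⟩ hwI
          exact hno w hwI g hg hgw
      have hmG : m ⊆ G := fun g hg => ⟨g, hg, inf_le_left⟩
      have hGm : G ⊆ m := hm.2 hGS hmG
      obtain ⟨f, hf⟩ := hFne
      exact hx (hGm ⟨f, hFsub hf, inf_le_right⟩)
    obtain ⟨i1, hi1, g1, hg1, h1⟩ := key a ha
    obtain ⟨i2, hi2, g2, hg2, h2⟩ := key b hb
    have hmem : (g1 ⊓ g2) ⊓ (a ⊔ b) ∈ m := hinf _ _ (hinf _ _ hg1 hg2) hab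
    have hle : (g1 ⊓ g2) ⊓ (a ⊔ b) ≤ i1 ⊔ i2 := by
      rw [inf_sup_left]
      apply sup_le
      · exact le_sup_of_le_left (le_trans (inf_le_inf_right a inf_le_left) h1)
      · exact le_sup_of_le_right (le_trans (inf_le_inf_right b inf_le_right) h2)
    exact hdis _ (hup _ _ hmem hle) (hIsup _ _ hi1 hi2)

end PMAlgebra

namespace PMAlgebra

variable {L : Type*} [PMAlgebra L]

lemma mem_phi {P : Set L} {a : L} : a ∈ phi P ↔ dm a ∉ P := Iff.rfl

lemma phi_phi (P : Set L) : phi (phi P) = P := by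
  ext a
  simp only [phi, Set.mem_setOf_eq, dm_dm, not_not]

lemma phi_prime {P : Set L} (hP : IsPrimeFilter P) : IsPrimeFilter (phi P) := by
  obtain ⟨hne, hnuniv, hup, hinf, hprime⟩ := hP
  refine ⟨⟨⊤, ?_⟩, ?_, ?_, ?_, ?_⟩
  · rw [mem_phi, dm_top]
    exact prime_bot_notMem ⟨hne, hnuniv, hup, hinf, hprime⟩
  · intro h
    have : (⊥:L) ∈ phi P := h ▸ Set.mem_univ ⊥
    rw [mem_phi, dm_bot] at this
    exact this (prime_top_mem ⟨hne, hnuniv, hup, hinf, hprime⟩)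
  · intro a b ha hab
    rw [mem_phi] at *
    intro hb
    exact ha (hup _ _ hb (dm_antitone hab))
  · intro a b ha hb
    rw [mem_phi, dm_inf] at *
    intro h
    rcases hprime _ _ h with h' | h'
    · exact ha h'
    · exact hb h'
  · intro a b hab
    rw [mem_phi, dm_sup] at hab
    by_contra hcon
    push_neg at hcon
    rw [mem_phi, not_not, mem_phi, not_not] at hcon
    exact hab (hinf _ _ hcon.1 hcon.2)

lemma phi_anti {P Q : Set L} (h : P ⊆ Q) : phi Q ⊆ phi P := by
  intro a ha hP
  exact ha (h hP)

lemma max_phi {P : Set L} (hP : IsMaximalPF P) : IsMinimalPF (phi P) := by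
  refine ⟨phi_prime hP.1, ?_⟩
  intro Q hQ hsub
  have h1 : phi (phi P) ⊆ phi Q := phi_anti hsub
  rw [phi_phi] at h1
  have h2 : phi Q = P := hP.2 (phi Q) (phi_prime hQ) h1
  calc Q = phi (phi Q) := (phi_phi Q).symm
    _ = phi P := by rw [h2]

lemma min_phi {P : Set L} (hP : IsMinimalPF P) : IsMaximalPF (phi P) := by
  refine ⟨phi_prime hP.1, ?_⟩
  intro Q hQ hsub
  have h1 : phi Q ⊆ phi (phi P) := phi_anti hsub
  rw [phi_phi] at h1
  have h2 : phi Q = P := hP.2 (phi Q) (phi_prime hQ) h1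
  calc Q = phi (phi Q) := (phi_phi Q).symm
    _ = phi P := by rw [h2]

/-- In a maximal prime filter, `x ∉ P` implies `pc x ∈ P`. -/
lemma maximal_pc {P : Set L} (hP : IsMaximalPF P) {x : L} (hx : x ∉ P) : pc x ∈ P := by
  by_contra hpc
  obtain ⟨hPpf, hPmax⟩ := hP
  obtain ⟨hne, hnuniv, hup, hinf, hprime⟩ := hPpf
  set F : Set L := {w | ∃ p ∈ P, p ⊓ x ≤ w} with hF
  have hFne : F.Nonempty := by
    obtain ⟨p, hp⟩ := hne
    exact ⟨x, p, hp, inf_le_right⟩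
  have hPF : P ⊆ F := fun p hp => ⟨p, hp, inf_le_left⟩
  obtain ⟨P', hP', hFP', hIP'⟩ := sep (I := {(⊥:L)}) hFne
    (by rintro a b ⟨p, hp, hpa⟩ hab; exact ⟨p, hp, hpa.trans hab⟩)
    (by rintro a b ⟨p1, hp1, h1⟩ ⟨p2, hp2, h2⟩
        refine ⟨p1 ⊓ p2, hinf _ _ hp1 hp2, le_inf ?_ ?_⟩
        · exact le_trans (inf_le_inf_right x inf_le_left) h1
        · exact le_trans (inf_le_inf_right x inf_le_right) h2)
    ⟨⊥, rfl⟩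
    (by rintro a b rfl rfl; simp)
    (by rintro w ⟨p, hp, hpw⟩ hw
        rw [Set.mem_singleton_iff] at hw
        subst hw
        have : p ⊓ x = ⊥ := le_antisymm hpw bot_le
        have : p ≤ pc x := (pc_iff x p).mp (by rwa [inf_comm])
        exact hpc (hup _ _ hp this))
  have hPP' : P ⊆ P' := hPF.trans hFP'
  have hx' : x ∈ P' := hFP' (by obtain ⟨p, hp⟩ := hne; exact ⟨p, hp, inf_le_right⟩)
  have : P' = P := hPmax P' hP' hPP'
  exact hx (this ▸ hx')

/-- Kleene implies `P` and `phi P` are comparable for prime `P`. -/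
lemma kleene_comparable (hk : Kleene L) {P : Set L} (hP : IsPrimeFilter P) :
    phi P ⊆ P ∨ P ⊆ phi P := by
  by_contra hcon
  push_neg at hcon
  obtain ⟨h1, h2⟩ := hcon
  obtain ⟨a, haphi, haP⟩ := Set.not_subset.mp h1
  obtain ⟨b, hbP, hbphi⟩ := Set.not_subset.mp h2
  rw [mem_phi, not_not] at hbphi
  have hb : b ⊓ dm b ∈ P := hP.2.2.2.1 _ _ hbP hbphi
  have := hP.2.2.1 _ _ hb (hk b a)
  rcases hP.2.2.2.2 _ _ this with h | h
  · exact haP h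
  · exact (mem_phi.mp haphi) h

/-- Core lemma: if the identity holds and `phi P ⊆ P` then `P` is maximal. -/
lemma core_max (hI : ∀ a : L, dm (C a) ≤ C a) {P : Set L}
    (hP : IsPrimeFilter P) (hphi : phi P ⊆ P) : IsMaximalPF P := by
  refine ⟨hP, ?_⟩
  intro Q hQ hPQ
  by_cases hQphi : Q ⊆ phi Q
  · -- then Q ⊆ phi Q ⊆ phi P ⊆ P, so Q = P
    have : Q ⊆ P := fun x hx => hphi (phi_anti hPQ (hQphi hx))
    exact Set.Subset.antisymm this hPQ
  · by_contra hne
    have hnsub : ¬ Q ⊆ P := fun h => hne (Set.Subset.antisymm h hPQ)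
    obtain ⟨b1, hb1Q, hb1P⟩ := Set.not_subset.mp hnsub
    obtain ⟨b2, hb2Q, hb2phi⟩ := Set.not_subset.mp hQphi
    set b := b1 ⊓ b2 with hb
    have hbQ : b ∈ Q := hQ.2.2.2.1 _ _ hb1Q hb2Q
    have hbP : b ∉ P := fun h => hb1P (hP.2.2.1 _ _ h inf_le_left)
    have hbphiQ : b ∉ phi Q := fun h => hb2phi ((phi_prime hQ).2.2.1 _ _ h inf_le_right)
    rw [mem_phi, not_not] at hbphiQ
    set u := b ⊓ dm b with hu
    have huQ : u ∈ Q := hQ.2.2.2.1 _ _ hbQ hbphiQ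
    have huP : u ∉ P := fun h => hbP (hP.2.2.1 _ _ h inf_le_left)
    have hpcuP : pc u ∉ P := by
      intro h
      have : pc u ∈ Q := hPQ h
      have : (⊥:L) ∈ Q := inf_pc u ▸ hQ.2.2.2.1 _ _ huQ this
      exact prime_bot_notMem hQ this
    -- evaluate the identity at phi P
    have hCphi : dm (C b) ∈ phi P := by
      have h1 : dm u ∈ phi P := by rw [mem_phi, dm_dm]; exact huP
      have h2 : dm (pc u) ∈ phi P := by rw [mem_phi, dm_dm]; exact hpcuP
      have : dm u ⊓ dm (pc u) ∈ phi P := (phi_prime hP).2.2.2.1 _ _ h1 h2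
      rwa [C, ← hu, dm_sup]
    have hCb : C b ∈ phi P := (phi_prime hP).2.2.1 _ _ hCphi (hI b)
    rw [C, ← hu] at hCb
    rcases (phi_prime hP).2.2.2.2 _ _ hCb with h | h
    · exact huP (hphi h)
    · exact hpcuP (hphi h)

end PMAlgebra

open PMAlgebra

/-- In a subdirectly irreducible pk-algebra, `C(a)' ≤ C(a)` holds for all `a`
iff the body is empty. -/
theorem dm_C_le_C_iff_body_empty {L : Type*} [PMAlgebra L]
    (hk : Kleene L) (hsi : SubdirectlyIrreducible L) :
    (∀ a : L, dm (C a) ≤ C a) ↔ body L = ∅ := by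
  constructor
  · intro hI
    rw [Set.eq_empty_iff_forall_notMem]
    rintro P ⟨hP, hnmax, hnmin⟩
    rcases kleene_comparable hk hP with h | h
    · exact hnmax (core_max hI hP h)
    · have h' : phi (phi P) ⊆ phi P := by rwa [phi_phi]
      have hmax := core_max hI (phi_prime hP) h'
      have hmin := max_phi hmax
      rw [phi_phi] at hmin
      exact hnmin hmin
  · intro hbody a
    by_contra hle
    set u := a ⊓ dm a with hu
    obtain ⟨P, hP, hFP, hIP⟩ := sep (F := {w : L | dm (C a) ≤ w}) (I := {w : L | w ≤ C a})
      ⟨dm (C a), le_rfl⟩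
      (fun x y hx hxy => le_trans hx hxy)
      (fun x y hx hy => le_inf hx hy)
      ⟨C a, le_rfl⟩
      (fun x y hx hy => sup_le hx hy)
      (fun x hx hxI => hle (le_trans hx hxI))
    have hdmC : dm (C a) ∈ P := hFP le_rfl
    have hCa : C a ∉ P := hIP (C a) le_rfl
    have huP : u ∉ P := fun h => hCa (hP.2.2.1 _ _ h (by rw [C, ← hu]; exact le_sup_left))
    have hpcuP : pc u ∉ P := fun h => hCa (hP.2.2.1 _ _ h (by rw [C, ← hu]; exact le_sup_right))
    have hdmsplit : dm u ⊓ dm (pc u) ∈ P := by rwa [C, ← hu, dm_sup] at hdmC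
    have hdmu : dm u ∈ P := hP.2.2.1 _ _ hdmsplit inf_le_left
    have hdmpcu : dm (pc u) ∈ P := hP.2.2.1 _ _ hdmsplit inf_le_right
    have hPbody : P ∉ body L := by rw [hbody]; exact Set.notMem_empty P
    have hmaxmin : IsMaximalPF P ∨ IsMinimalPF P := by
      by_contra hc
      push_neg at hc
      exact hPbody ⟨hP, hc.1, hc.2⟩
    rcases hmaxmin with hmax | hmin
    · exact hpcuP (maximal_pc hmax huP)
    · have hmax' := min_phi hmin
      have huphi : u ∉ phi P := by rw [mem_phi, not_not]; exact hdmu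
      have := maximal_pc hmax' huphi
      rw [mem_phi] at this
      exact this hdmpcu
end

section
/- Let L be a subdirectly irreducible pk-algebra satisfying a* ≤ C(b) ∨ T(a)* for all a, b ∈ L, and let d be its least dense element. Then every a ∈ L satisfies a ≤ d, or d ≤ a and a ≤ d', or d' ≤ a; i.e. L = [0, d] ∪ [d, d'] ∪ [d', 1]. -/
open PMAlgebra

section Aux

open PMAlgebra

variable {L : Type*} [PMAlgebra L]

lemma pm_inf_pc (a : L) : a ⊓ pc a = ⊥ := (pc_iff a (pc a)).mpr le_rfl

lemma pm_pc_inf (a : L) : pc a ⊓ a = ⊥ := by rw [inf_comm]; exact pm_inf_pc a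

lemma pm_pc_anti {a b : L} (h : a ≤ b) : pc b ≤ pc a := by
  apply (pc_iff a (pc b)).mp
  apply le_bot_iff.mp
  calc a ⊓ pc b ≤ b ⊓ pc b := inf_le_inf_right _ h
    _ = ⊥ := pm_inf_pc b

lemma pm_le_pcpc (a : L) : a ≤ pc (pc a) := (pc_iff (pc a) a).mp (pm_pc_inf a)

lemma pm_pc_top : pc (⊤ : L) = ⊥ := by
  have h := pm_inf_pc (⊤ : L); rwa [top_inf_eq] at h

lemma pm_pc_sup (a b : L) : pc (a ⊔ b) = pc a ⊓ pc b := by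
  apply le_antisymm
  · exact le_inf (pm_pc_anti le_sup_left) (pm_pc_anti le_sup_right)
  · apply (pc_iff (a ⊔ b) (pc a ⊓ pc b)).mp
    have h1 : a ⊓ (pc a ⊓ pc b) = ⊥ := le_bot_iff.mp
      (calc a ⊓ (pc a ⊓ pc b) ≤ a ⊓ pc a := inf_le_inf_left a inf_le_left
        _ = ⊥ := pm_inf_pc a)
    have h2 : b ⊓ (pc a ⊓ pc b) = ⊥ := le_bot_iff.mp
      (calc b ⊓ (pc a ⊓ pc b) ≤ b ⊓ pc b := inf_le_inf_left b inf_le_right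
        _ = ⊥ := pm_inf_pc b)
    rw [inf_sup_right, h1, h2, sup_bot_eq]

lemma pm_dm_anti {a b : L} (h : a ≤ b) : dm b ≤ dm a := by
  have h1 : a ⊓ b = a := inf_eq_left.mpr h
  calc dm b ≤ dm a ⊔ dm b := le_sup_right
    _ = dm (a ⊓ b) := (dm_inf a b).symm
    _ = dm a := by rw [h1]

lemma pm_dm_le_iff {a b : L} : a ≤ dm b ↔ b ≤ dm a := by
  constructor
  · intro h; have := pm_dm_anti h; rwa [dm_dm] at this
  · intro h; have := pm_dm_anti h; rwa [dm_dm] at this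

lemma pm_dm_sup (a b : L) : dm (a ⊔ b) = dm a ⊓ dm b := by
  have h : a ⊔ b = dm (dm a ⊓ dm b) := by rw [dm_inf, dm_dm, dm_dm]
  rw [h, dm_dm]

lemma pm_dm_top : dm (⊤ : L) = ⊥ := by
  apply le_bot_iff.mp
  have h : dm (⊤ : L) ≤ dm (dm (⊥ : L)) := pm_dm_anti le_top
  rwa [dm_dm] at h

lemma pm_dm_bot : dm (⊥ : L) = ⊤ := by rw [← pm_dm_top, dm_dm]

lemma pm_dm_inj {a b : L} (h : dm a = dm b) : a = b := by
  have := congrArg dm h; rwa [dm_dm, dm_dm] at this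

lemma pm_pc_inf_w (x w : L) : pc x ⊓ w = pc (x ⊓ w) ⊓ w := by
  apply le_antisymm
  · exact inf_le_inf_right w (pm_pc_anti inf_le_left)
  · refine le_inf ?_ inf_le_right
    apply (pc_iff x (pc (x ⊓ w) ⊓ w)).mp
    calc x ⊓ (pc (x ⊓ w) ⊓ w) = (x ⊓ w) ⊓ pc (x ⊓ w) := by
          rw [← inf_assoc, inf_assoc x, inf_comm (pc (x ⊓ w)) w, ← inf_assoc]
      _ = ⊥ := pm_inf_pc (x ⊓ w)

lemma pm_theta_cong (w : L) (hw : w ⊓ dm w = ⊥) :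
    IsCongruence (fun x y : L => x ⊓ w = y ⊓ w) := by
  refine ⟨⟨fun _ => rfl, fun h => h.symm, fun h1 h2 => h1.trans h2⟩, ?_, ?_, ?_, ?_⟩
  · intro a b c e h1 h2
    show (a ⊓ c) ⊓ w = (b ⊓ e) ⊓ w
    rw [inf_inf_distrib_right, h1, h2, ← inf_inf_distrib_right]
  · intro a b c e h1 h2
    show (a ⊔ c) ⊓ w = (b ⊔ e) ⊓ w
    rw [inf_sup_right, h1, h2, ← inf_sup_right]
  · intro a b h
    show dm a ⊓ w = dm b ⊓ w
    have hdw : dm w ⊓ w = ⊥ := by rw [inf_comm]; exact hw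
    have key : ∀ u : L, (u ⊔ dm w) ⊓ w = u ⊓ w := fun u => by
      rw [inf_sup_right, hdw, sup_bot_eq]
    have h2 : dm a ⊔ dm w = dm b ⊔ dm w := by rw [← dm_inf, ← dm_inf, h]
    calc dm a ⊓ w = (dm a ⊔ dm w) ⊓ w := (key _).symm
      _ = (dm b ⊔ dm w) ⊓ w := by rw [h2]
      _ = dm b ⊓ w := key _
  · intro a b h
    show pc a ⊓ w = pc b ⊓ w
    rw [pm_pc_inf_w a w, h, ← pm_pc_inf_w]

/-- From subdirect irreducibility: there is no nontrivial De Morgan-complemented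
element. -/
lemma pm_B (hsi : SubdirectlyIrreducible L) :
    ∀ g : L, g ⊓ dm g = ⊥ → g = ⊥ ∨ g = ⊤ := by
  intro g hg
  by_cases h1 : g = ⊥
  · exact Or.inl h1
  by_cases h2 : g = ⊤
  · exact Or.inr h2
  exfalso
  obtain ⟨μ, hμc, hμne, hμle⟩ := hsi
  have hgd : dm g ⊓ dm (dm g) = ⊥ := by rw [dm_dm, inf_comm]; exact hg
  have c1 := pm_theta_cong g hg
  have c2 := pm_theta_cong (dm g) hgd
  have ne1 : (fun x y : L => x ⊓ g = y ⊓ g) ≠ (fun a b : L => a = b) := by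
    intro h
    have h0 : (fun x y : L => x ⊓ g = y ⊓ g) (dm g) ⊥ := by
      show dm g ⊓ g = ⊥ ⊓ g
      rw [bot_inf_eq, inf_comm]; exact hg
    rw [h] at h0
    apply h2
    rw [← dm_dm g, h0, pm_dm_bot]
  have ne2 : (fun x y : L => x ⊓ dm g = y ⊓ dm g) ≠ (fun a b : L => a = b) := by
    intro h
    have h0 : (fun x y : L => x ⊓ dm g = y ⊓ dm g) g ⊥ := by
      show g ⊓ dm g = ⊥ ⊓ dm g
      rw [bot_inf_eq]; exact hg
    rw [h] at h0
    exact h1 h0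
  have key1 := hμle _ c1 ne1
  have key2 := hμle _ c2 ne2
  have hpair : ∃ x y : L, μ x y ∧ x ≠ y := by
    by_contra hno
    push_neg at hno
    apply hμne
    funext x y
    apply propext
    constructor
    · exact fun h => hno x y h
    · rintro rfl; exact hμc.1.refl x
  obtain ⟨x, y, hxy, hne⟩ := hpair
  have e1 : x ⊓ g = y ⊓ g := key1 x y hxy
  have e2 : x ⊓ dm g = y ⊓ dm g := key2 x y hxy
  have htop : g ⊔ dm g = ⊤ := by
    apply pm_dm_inj
    rw [pm_dm_sup, dm_dm, pm_dm_top, inf_comm]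
    exact hg
  apply hne
  calc x = x ⊓ (g ⊔ dm g) := by rw [htop, inf_top_eq]
    _ = (x ⊓ g) ⊔ (x ⊓ dm g) := inf_sup_left x g (dm g)
    _ = (y ⊓ g) ⊔ (y ⊓ dm g) := by rw [e1, e2]
    _ = y ⊓ (g ⊔ dm g) := (inf_sup_left y g (dm g)).symm
    _ = y := by rw [htop, inf_top_eq]

end Aux

/-- In a subdirectly irreducible pk-algebra satisfying `a* ≤ C(b) ∨ T(a)*` with
least dense element `d`, every element lies in `[0,d] ∪ [d,d'] ∪ [d',1]`. -/
theorem eq_union_intervals {L : Type*} [PMAlgebra L]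
    (hk : Kleene L) (hsi : SubdirectlyIrreducible L)
    (hid : ∀ a b : L, pc a ≤ C b ⊔ pc (T a))
    (d : L) (hd : pc d = ⊥) (hleast : ∀ e : L, pc e = ⊥ → d ≤ e) :
    ∀ a : L, a ≤ d ∨ (d ≤ a ∧ a ≤ dm d) ∨ dm d ≤ a := by
  by_cases htop : (⊤ : L) ≤ d
  · intro a; exact Or.inl (le_top.trans htop)
  have hB := pm_B hsi
  -- d is below every x ⊔ dm x
  have hKD : ∀ x : L, d ≤ x ⊔ dm x := by
    intro x
    have hx : pc (x ⊔ dm x) ⊓ x = ⊥ := le_bot_iff.mp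
      (calc pc (x ⊔ dm x) ⊓ x ≤ pc (x ⊔ dm x) ⊓ (x ⊔ dm x) := inf_le_inf_left _ le_sup_left
        _ = ⊥ := pm_pc_inf _)
    have hdx : pc (x ⊔ dm x) ⊓ dm x = ⊥ := le_bot_iff.mp
      (calc pc (x ⊔ dm x) ⊓ dm x ≤ pc (x ⊔ dm x) ⊓ (x ⊔ dm x) := inf_le_inf_left _ le_sup_right
        _ = ⊥ := pm_pc_inf _)
    have hkl : pc (x ⊔ dm x) ⊓ dm (pc (x ⊔ dm x)) = ⊥ := by
      apply le_bot_iff.mp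
      have h1 : pc (x ⊔ dm x) ⊓ dm (pc (x ⊔ dm x)) ≤ x ⊔ dm x := hk _ x
      calc pc (x ⊔ dm x) ⊓ dm (pc (x ⊔ dm x))
          = (pc (x ⊔ dm x) ⊓ dm (pc (x ⊔ dm x))) ⊓ (x ⊔ dm x) := (inf_eq_left.mpr h1).symm
        _ = ((pc (x ⊔ dm x) ⊓ dm (pc (x ⊔ dm x))) ⊓ x)
            ⊔ ((pc (x ⊔ dm x) ⊓ dm (pc (x ⊔ dm x))) ⊓ dm x) := inf_sup_left _ _ _
        _ ≤ (pc (x ⊔ dm x) ⊓ x) ⊔ (pc (x ⊔ dm x) ⊓ dm x) :=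
            sup_le_sup (inf_le_inf_right _ inf_le_left) (inf_le_inf_right _ inf_le_left)
        _ = ⊥ := by rw [hx, hdx, sup_bot_eq]
    rcases hB _ hkl with h0 | h0
    · exact hleast _ h0
    · exfalso
      apply htop
      have he : x ⊔ dm x = ⊥ := by
        have h := pm_pc_inf (x ⊔ dm x); rwa [h0, top_inf_eq] at h
      have hx0 : x = ⊥ := le_bot_iff.mp (le_sup_left.trans he.le)
      have hdx0 : dm x = ⊥ := le_bot_iff.mp (le_sup_right.trans he.le)
      have hbt : (⊤ : L) = ⊥ := by
        calc (⊤ : L) = dm ⊥ := pm_dm_bot.symm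
          _ = dm x := by rw [hx0]
          _ = ⊥ := hdx0
      rw [hbt]; exact bot_le
  -- d ≤ dm d
  have hI0 : d ≤ dm d := by
    have hz0 : pc (dm d) ⊓ dm (pc (dm d)) = ⊥ := by
      have h1 : d ≤ pc (dm d) ⊔ dm (pc (dm d)) := hKD _
      have h2 : pc (dm d) ⊓ dm (pc (dm d)) ≤ dm d := by
        have h3 := pm_dm_anti h1
        rw [pm_dm_sup, dm_dm] at h3
        calc pc (dm d) ⊓ dm (pc (dm d)) = dm (pc (dm d)) ⊓ pc (dm d) := inf_comm _ _
          _ ≤ dm d := h3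
      apply le_bot_iff.mp
      calc pc (dm d) ⊓ dm (pc (dm d))
          = (pc (dm d) ⊓ dm (pc (dm d))) ⊓ dm d := (inf_eq_left.mpr h2).symm
        _ ≤ pc (dm d) ⊓ dm d := inf_le_inf_right _ inf_le_left
        _ = ⊥ := pm_pc_inf (dm d)
    rcases hB _ hz0 with h0 | h0
    · exact hleast _ h0
    · exfalso
      apply htop
      have hdd : dm d = ⊥ := by
        have h := pm_pc_inf (dm d); rwa [h0, top_inf_eq] at h
      have : d = ⊤ := pm_dm_inj (by rw [hdd, pm_dm_top])
      rw [this]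
  -- C d = d
  have hCd : C d = d := by
    have hXd : d ⊓ dm d = d := inf_eq_left.mpr hI0
    show (d ⊓ dm d) ⊔ pc (d ⊓ dm d) = d
    rw [hXd, hd, sup_bot_eq]
  have hHIDd : ∀ x : L, pc x ≤ d ⊔ pc (T x) := by
    intro x; have h := hid x d; rwa [hCd] at h
  -- basic facts about elements of the form r ⊓ dm r
  have habsorb : ∀ m X Y : L, m ≤ X ⊔ Y → m ⊓ X = ⊥ → m ≤ Y := by
    intro m X Y h hX
    calc m = m ⊓ (X ⊔ Y) := (inf_eq_left.mpr h).symm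
      _ = (m ⊓ X) ⊔ (m ⊓ Y) := inf_sup_left _ _ _
      _ = m ⊓ Y := by rw [hX, bot_sup_eq]
      _ ≤ Y := inf_le_right
  have hm1 : ∀ r : L, r ⊓ dm r ≤ dm (r ⊓ dm r) := by
    intro r; rw [dm_inf, dm_dm]; exact inf_le_right.trans le_sup_left
  have hm2 : ∀ r : L, r ⊓ dm r ≤ dm (pc (r ⊓ dm r)) :=
    fun r => habsorb _ _ _ (hk r (pc (r ⊓ dm r))) (pm_inf_pc _)
  have hm3 : ∀ r : L, pc (r ⊓ dm r) ≤ dm (r ⊓ dm r) := fun r => pm_dm_le_iff.mp (hm2 r)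
  have hTm : ∀ r : L,
      T (r ⊓ dm r) = (r ⊓ dm r) ⊔ (pc (r ⊓ dm r) ⊓ dm (pc (r ⊓ dm r))) := by
    intro r
    have hmdm : (r ⊓ dm r) ⊓ dm (r ⊓ dm r) = r ⊓ dm r := inf_eq_left.mpr (hm1 r)
    have hCm : C (r ⊓ dm r) = (r ⊓ dm r) ⊔ pc (r ⊓ dm r) := by
      show ((r ⊓ dm r) ⊓ dm (r ⊓ dm r)) ⊔ pc ((r ⊓ dm r) ⊓ dm (r ⊓ dm r))
          = (r ⊓ dm r) ⊔ pc (r ⊓ dm r)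
      rw [hmdm]
    show C (r ⊓ dm r) ⊓ dm (C (r ⊓ dm r))
        = (r ⊓ dm r) ⊔ (pc (r ⊓ dm r) ⊓ dm (pc (r ⊓ dm r)))
    rw [hCm, pm_dm_sup, inf_sup_right]
    congr 1
    · exact inf_eq_left.mpr (le_inf (hm1 r) (hm2 r))
    · rw [← inf_assoc, inf_eq_left.mpr (hm3 r)]
  -- the "V" lemma: for m-forms, pc m ⊓ dm (pc m) ≤ d ⊓ dm (pc m)
  have hV : ∀ r : L, pc (r ⊓ dm r) ⊓ dm (pc (r ⊓ dm r)) ≤ d ⊓ dm (pc (r ⊓ dm r)) := by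
    intro r
    have h1 : pc (r ⊓ dm r) ≤ d ⊔ pc (T (r ⊓ dm r)) := hHIDd _
    rw [hTm r, pm_pc_sup] at h1
    -- h1 : pc m ≤ d ⊔ (pc m ⊓ pc (pc m ⊓ dm (pc m)))
    have h2 : pc (r ⊓ dm r) ⊓ dm (pc (r ⊓ dm r))
        ≤ (d ⊔ (pc (r ⊓ dm r) ⊓ pc (pc (r ⊓ dm r) ⊓ dm (pc (r ⊓ dm r)))))
          ⊓ dm (pc (r ⊓ dm r)) :=
      le_inf (inf_le_left.trans h1) inf_le_right
    have h3 : (d ⊔ (pc (r ⊓ dm r) ⊓ pc (pc (r ⊓ dm r) ⊓ dm (pc (r ⊓ dm r)))))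
          ⊓ dm (pc (r ⊓ dm r))
        = (d ⊓ dm (pc (r ⊓ dm r)))
          ⊔ ((pc (r ⊓ dm r) ⊓ dm (pc (r ⊓ dm r)))
              ⊓ pc (pc (r ⊓ dm r) ⊓ dm (pc (r ⊓ dm r)))) := by
      rw [inf_sup_right, inf_right_comm]
    rw [h3, pm_inf_pc, sup_bot_eq] at h2
    exact h2
  -- Comparability with d
  have CMP : ∀ b : L, b ≤ d ∨ d ≤ b := by
    intro b
    -- abbreviations (as plain equalities)
    -- q = pc b, t = q ⊓ dm q, z = pc t, tz = z ⊓ dm z, p = pc tz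
    set q : L := pc b with hqdef
    set t : L := q ⊓ dm q with htdef
    set z : L := pc t with hzdef
    set tz : L := z ⊓ dm z with htzdef
    set p : L := pc tz with hpdef
    -- V at tz :  p ⊓ dm p ≤ d ⊓ dm p
    have hv : p ⊓ dm p ≤ d ⊓ dm p := by
      have h := hV z
      rw [← htzdef, ← hpdef] at h
      exact h
    -- Z-dec : z ≤ d ⊔ (z ⊓ p)
    have hzdec : z ≤ d ⊔ (z ⊓ p) := by
      have h1 : pc t ≤ d ⊔ pc (T t) := hHIDd t
      have h2 : T t = t ⊔ (pc t ⊓ dm (pc t)) := by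
        have h := hTm q
        rw [← htdef] at h
        exact h
      rw [h2, pm_pc_sup, ← hzdef, ← htzdef, ← hpdef] at h1
      exact h1
    have hzp : z ≤ d ⊔ p := hzdec.trans (sup_le_sup_left inf_le_right d)
    -- d ⊓ dm p ≤ dm z
    have hzdm : d ⊓ dm p ≤ dm z := by
      have h1 : z ≤ dm d ⊔ p := hzp.trans (sup_le_sup_right hI0 p)
      have h2 : dm (d ⊓ dm p) = dm d ⊔ p := by rw [dm_inf, dm_dm]
      rw [← h2] at h1
      exact pm_dm_le_iff.mp h1
    -- (z ⊓ p) is complemented-candidate : (z ⊓ p) ⊓ dm (z ⊓ p) = ⊥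
    have hdelta : (z ⊓ p) ⊓ dm (z ⊓ p) = ⊥ := by
      rw [dm_inf, inf_sup_left]
      have e1 : (z ⊓ p) ⊓ dm z = ⊥ := by
        rw [inf_right_comm, ← htzdef]
        exact pm_inf_pc tz
      have e2 : (z ⊓ p) ⊓ dm p = ⊥ := by
        apply le_bot_iff.mp
        have hA : (z ⊓ p) ⊓ dm p ≤ tz := by
          calc (z ⊓ p) ⊓ dm p = z ⊓ (p ⊓ dm p) := inf_assoc z p (dm p)
            _ ≤ z ⊓ (d ⊓ dm p) := inf_le_inf_left z hv
            _ ≤ z ⊓ dm z := inf_le_inf_left z hzdm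
            _ = tz := htzdef.symm
        have hBp : (z ⊓ p) ⊓ dm p ≤ p := inf_le_left.trans inf_le_right
        calc (z ⊓ p) ⊓ dm p ≤ tz ⊓ p := le_inf hA hBp
          _ = ⊥ := pm_inf_pc tz
      rw [e1, e2, sup_bot_eq]
    rcases hB _ hdelta with hzero | hone
    · -- z ⊓ p = ⊥ : then pc q ≤ d, so b ≤ d
      left
      have hTq : T q = t ⊔ tz := by
        have hCq : C q = t ⊔ z := by
          show (q ⊓ dm q) ⊔ pc (q ⊓ dm q) = t ⊔ z
          rw [← htdef, ← hzdef]
        have ht_le_dmz : t ≤ dm z := by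
          have h := hm2 q; rw [← htdef, ← hzdef] at h; exact h
        have htz_le_dmt : tz ≤ dm t := by
          apply pm_dm_le_iff.mp
          rw [htzdef, dm_inf, dm_dm]
          exact ht_le_dmz.trans le_sup_left
        have ht_le_dmt : t ≤ dm t := by
          have h := hm1 q; rw [← htdef] at h; exact h
        show C q ⊓ dm (C q) = t ⊔ tz
        rw [hCq, pm_dm_sup, inf_sup_right]
        congr 1
        · exact inf_eq_left.mpr (le_inf ht_le_dmt ht_le_dmz)
        · rw [inf_comm (dm t) (dm z), ← inf_assoc, ← htzdef]
          exact inf_eq_left.mpr htz_le_dmt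
      have h1 : pc q ≤ d ⊔ pc (T q) := hHIDd q
      rw [hTq, pm_pc_sup, ← hzdef, ← hpdef, hzero, sup_bot_eq] at h1
      calc b ≤ pc (pc b) := pm_le_pcpc b
        _ = pc q := by rw [hqdef]
        _ ≤ d := h1
    · -- z ⊓ p = ⊤ : then t = ⊥, so q is complemented
      have hztop : z = ⊤ := top_unique (hone ▸ inf_le_left)
      have htbot : q ⊓ dm q = ⊥ := by
        have h := pm_le_pcpc t
        rw [← hzdef, hztop, pm_pc_top] at h
        have : t = ⊥ := le_bot_iff.mp h
        rw [← htdef]; exact this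
      rcases hB _ htbot with hq0 | hq1
      · right
        apply hleast
        rw [← hqdef]; exact hq0
      · left
        have h := pm_le_pcpc b
        rw [← hqdef, hq1, pm_pc_top] at h
        rw [le_bot_iff.mp h]
        exact bot_le
  -- conclude the trichotomy
  intro a
  rcases CMP a with h | h
  · exact Or.inl h
  · rcases CMP (dm a) with h2 | h2
    · refine Or.inr (Or.inr ?_)
      have := pm_dm_anti h2
      rwa [dm_dm] at this
    · exact Or.inr (Or.inl ⟨h, pm_dm_le_iff.mp h2⟩)
end
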